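/- Let s ∈ (0,1] and let G : [0,∞) → ℝ be s-convex in the second sense, i.e., G(γx + (1-γ)y) ≤ γ^s G(x) + (1-γ)^s G(y) for x, y ≥ 0, γ ∈ [0,1]. Then for 0 ≤ ν < μ with G integrable on [ν, μ], (1/(μ-ν)) ∫_ν^μ G(x) dx ≤ (G(ν) + G(μ))/(s+1). -/

import Mathlib

open MeasureTheory intervalIntegral

theorem s_convex_HH_right
    (ν μ s : ℝ) (hν : 0 ≤ ν) (hνμ : ν < μ) (hs : s ∈ Set.Ioc (0:ℝ) 1)
    (G : ℝ → ℝ)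
    (hG : ∀ x : ℝ, 0 ≤ x → ∀ y : ℝ, 0 ≤ y → ∀ γ ∈ Set.Icc (0:ℝ) 1,
      G (γ * x + (1 - γ) * y) ≤ γ ^ s * G x + (1 - γ) ^ s * G y)
    (hGint : IntervalIntegrable G MeasureTheory.volume ν μ) :
    (1 / (μ - ν)) * (∫ x in ν..μ, G x) ≤ (G ν + G μ) / (s + 1) := by
  have hc : μ - ν ≠ 0 := sub_ne_zero.2 (ne_of_gt hνμ)
  have hs1 : (0:ℝ) < s + 1 := by linarith [hs.1]
  -- substitution
  have hsub : ∫ t in (0:ℝ)..1, G ((μ - ν) * t + ν)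
      = (μ - ν)⁻¹ • ∫ x in ν..μ, G x := by
    rw [intervalIntegral.integral_comp_mul_add G hc ν]
    norm_num
  -- integrability of substituted function
  have hint1 : IntervalIntegrable (fun t => G ((μ - ν) * t + ν)) volume 0 1 := by
    have h1 := (hGint.comp_add_right ν).comp_mul_left (c := μ - ν)
    simpa [hc, sub_div, mul_comm] using h1
  have hint2 : IntervalIntegrable (fun t : ℝ => t ^ s * G μ + (1 - t) ^ s * G ν)
      volume 0 1 := by
    apply IntervalIntegrable.add
    · exact (intervalIntegral.intervalIntegrable_rpow (Or.inl hs.1.le)).mul_const _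
    · have h2 := ((intervalIntegral.intervalIntegrable_rpow (a := 0) (b := 1) (r := s)
        (Or.inl hs.1.le)).comp_sub_left 1).symm
      simpa using h2.mul_const (G ν)
  -- pointwise bound
  have hmono : ∀ t ∈ Set.Icc (0:ℝ) 1,
      G ((μ - ν) * t + ν) ≤ t ^ s * G μ + (1 - t) ^ s * G ν := by
    intro t ht
    have := hG μ (le_of_lt (lt_of_le_of_lt hν hνμ)) ν hν t ht
    have harg : t * μ + (1 - t) * ν = (μ - ν) * t + ν := by ring
    rwa [harg] at this
  have hle : ∫ t in (0:ℝ)..1, G ((μ - ν) * t + ν)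
      ≤ ∫ t in (0:ℝ)..1, (t ^ s * G μ + (1 - t) ^ s * G ν) :=
    intervalIntegral.integral_mono_on (by norm_num) hint1 hint2 hmono
  have hrpow : ∫ t in (0:ℝ)..1, t ^ s = 1 / (s + 1) := by
    rw [integral_rpow (Or.inl (by linarith [hs.1]))]
    rw [Real.zero_rpow (by positivity), Real.one_rpow]
    ring
  have hrpow2 : ∫ t in (0:ℝ)..1, (1 - t) ^ s = 1 / (s + 1) := by
    rw [intervalIntegral.integral_comp_sub_left (fun x : ℝ => x ^ s) 1]
    simpa using hrpow
  have hrhs : ∫ t in (0:ℝ)..1, (t ^ s * G μ + (1 - t) ^ s * G ν)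
      = (G ν + G μ) / (s + 1) := by
    rw [intervalIntegral.integral_add
      ((intervalIntegral.intervalIntegrable_rpow (Or.inl hs.1.le)).mul_const _)
      (by simpa using (((intervalIntegral.intervalIntegrable_rpow (a := 0) (b := 1) (r := s)
        (Or.inl hs.1.le)).comp_sub_left 1).symm).mul_const (G ν)),
      intervalIntegral.integral_mul_const, intervalIntegral.integral_mul_const,
      hrpow, hrpow2]
    ring
  calc (1 / (μ - ν)) * (∫ x in ν..μ, G x)
      = ∫ t in (0:ℝ)..1, G ((μ - ν) * t + ν) := by
        rw [hsub]; simp [smul_eq_mul, one_div]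
    _ ≤ (G ν + G μ) / (s + 1) := by rw [← hrhs]; exact hle
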